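/- For h ≥ 1, let L_h be the graph obtained from a path P_{h+1} with h edges by adding two new vertices tr_1, tr_2 each adjacent to all path vertices; let hd denote one fixed endpoint of the path. Define b_{B,C}(h) = Z(L_h; B(h), C(h); t, 1) for a partition (B,C) of {tr_1, tr_2, hd}. Then b_{{tr_1,hd},{tr_2}}(h) = (t²+t)^h · t. (By symmetry the same formula holds for b_{{tr_2,hd},{tr_1}}(h), b_{{tr_1},{tr_2,hd}}(h) and b_{{tr_2},{tr_1,hd}}(h).) -/

import Mathlib

open Finset

/-- The set of edges of `G` contained in the vertex subset `S`. -/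
def edgeIn {V : Type*} [Fintype V] [DecidableEq V] (G : SimpleGraph V) [DecidableRel G.Adj]
    (S : Finset V) : Finset (Sym2 V) :=
  G.edgeFinset.filter (· ∈ S.sym2)

/-- The restricted bivariate Ising polynomial `Z(G;B,C;t,y)`: the sum ranges over
all `S` with `B ⊆ S ⊆ V(G) ∖ C`. -/
def ZbiBC {V : Type*} [Fintype V] [DecidableEq V] (G : SimpleGraph V) [DecidableRel G.Adj]
    (B C : Finset V) (t y : ℚ) : ℚ :=
  ∑ S ∈ univ.filter (fun S : Finset V => B ⊆ S ∧ Disjoint S C),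
    t ^ ((edgeIn G S).card + (edgeIn G Sᶜ).card) * y ^ S.card

instance fromRel.decidableRel {V : Type*} [DecidableEq V] (r : V → V → Prop) [DecidableRel r] :
    DecidableRel (SimpleGraph.fromRel r).Adj := fun a b =>
  inferInstanceAs (Decidable (a ≠ b ∧ (r a b ∨ r b a)))

/-- One-directional adjacency of the graph `L_h`: path vertices `inl i` are consecutive,
and each of the two apex vertices `inr 0 = tr₁`, `inr 1 = tr₂` is joined to every
path vertex. -/
def lRel (h : ℕ) : Fin (h + 1) ⊕ Fin 2 → Fin (h + 1) ⊕ Fin 2 → Bool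
  | .inl i, .inl j => (i : ℕ) + 1 == (j : ℕ)
  | .inl _, .inr _ => true
  | _, _ => false

/-- The graph `L_h`: a path `p₀, …, p_h` (with `h` edges) together with two apex vertices
`tr₁(h) = inr 0` and `tr₂(h) = inr 1`, each adjacent to all path vertices.
The head `hd(h)` is the endpoint `inl (Fin.last h)`. -/
def Lgraph (h : ℕ) : SimpleGraph (Fin (h + 1) ⊕ Fin 2) :=
  SimpleGraph.fromRel (fun a b => lRel h a b = true)

instance (h : ℕ) : DecidableRel (Lgraph h).Adj := fromRel.decidableRel _

def pathE (h : ℕ) : Finset (Sym2 (Fin (h+1) ⊕ Fin 2)) :=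
  (univ : Finset (Fin h)).image (fun j => s(Sum.inl j.castSucc, Sum.inl j.succ))

def apexE (h : ℕ) : Finset (Sym2 (Fin (h+1) ⊕ Fin 2)) :=
  (univ : Finset (Fin (h+1) × Fin 2)).image (fun p => s(Sum.inl p.1, Sum.inr p.2))

lemma step_ex {h : ℕ} {i j : Fin (h+1)} (hij : (i:ℕ)+1 = (j:ℕ)) :
    ∃ k : Fin h, k.castSucc = i ∧ k.succ = j := by
  have hlt : (i:ℕ) < h := by have := j.isLt; omega
  exact ⟨⟨i, hlt⟩, Fin.ext rfl, Fin.ext (by simpa using hij)⟩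

lemma edge_decomp (h : ℕ) : (Lgraph h).edgeFinset = pathE h ∪ apexE h := by
  ext z
  induction z using Sym2.ind with
  | _ a b =>
    rw [SimpleGraph.mem_edgeFinset]
    simp only [SimpleGraph.mem_edgeFinset, SimpleGraph.mem_edgeSet, pathE, apexE,
      Finset.mem_union, Finset.mem_image, Finset.mem_univ, true_and, Sym2.eq_iff,
      Lgraph, SimpleGraph.fromRel_adj]
    constructor
    · rintro ⟨hne, hadj⟩
      cases a with
      | inl i =>
        cases b with
        | inl j =>
          simp only [lRel, beq_iff_eq] at hadj
          rcases hadj with hij | hji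
          · obtain ⟨k, h1, h2⟩ := step_ex hij
            exact Or.inl ⟨k, Or.inl ⟨by rw [h1], by rw [h2]⟩⟩
          · obtain ⟨k, h1, h2⟩ := step_ex hji
            exact Or.inl ⟨k, Or.inr ⟨by rw [h1], by rw [h2]⟩⟩
        | inr k => exact Or.inr ⟨(i, k), Or.inl ⟨rfl, rfl⟩⟩
      | inr k =>
        cases b with
        | inl i => exact Or.inr ⟨(i, k), Or.inr ⟨rfl, rfl⟩⟩
        | inr k' => simp only [lRel] at hadj; exact absurd hadj (by simp)
    · rintro (⟨j, (⟨h1, h2⟩ | ⟨h1, h2⟩)⟩ | ⟨p, (⟨h1, h2⟩ | ⟨h1, h2⟩)⟩) <;> subst h1 <;> subst h2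
      · exact ⟨by simp [Fin.ext_iff], Or.inl (by simp [lRel])⟩
      · exact ⟨by simp [Fin.ext_iff], Or.inr (by simp [lRel])⟩
      · exact ⟨by simp, Or.inl (by simp [lRel])⟩
      · exact ⟨by simp, Or.inr (by simp [lRel])⟩
open Finset

lemma path_inj (h : ℕ) : Function.Injective
    (fun j : Fin h => s(Sum.inl (α := Fin (h+1)) (β := Fin 2) j.castSucc, Sum.inl j.succ)) := by
  intro a b hab
  simp only [Sym2.eq_iff, Sum.inl.injEq] at hab
  rcases hab with ⟨h1, _⟩ | ⟨h1, h2⟩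
  · exact Fin.castSucc_injective _ h1
  · have := congrArg Fin.val h1
    have := congrArg Fin.val h2
    simp at *
    omega

lemma apex_inj (h : ℕ) : Function.Injective
    (fun p : Fin (h+1) × Fin 2 => s(Sum.inl (α := Fin (h+1)) (β := Fin 2) p.1, Sum.inr p.2)) := by
  intro a b hab
  simp only [Sym2.eq_iff] at hab
  rcases hab with ⟨h1, h2⟩ | ⟨h1, _⟩
  · exact Prod.ext (by simpa using h1) (by simpa using h2)
  · exact absurd h1 (by simp)

lemma path_apex_disj (h : ℕ) : Disjoint (pathE h) (apexE h) := by
  rw [Finset.disjoint_left]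
  rintro z hz hz'
  simp only [pathE, apexE, Finset.mem_image, Finset.mem_univ, true_and] at hz hz'
  obtain ⟨j, rfl⟩ := hz
  obtain ⟨p, hp⟩ := hz'
  rw [Sym2.eq_iff] at hp
  rcases hp with ⟨_, h2⟩ | ⟨h1, _⟩ <;> simp_all

lemma card_edgeIn (h : ℕ) (S : Finset (Fin (h+1) ⊕ Fin 2)) :
    (edgeIn (Lgraph h) S).card =
      (univ.filter fun j : Fin h => Sum.inl j.castSucc ∈ S ∧ Sum.inl j.succ ∈ S).card +
      (univ.filter fun p : Fin (h+1) × Fin 2 => Sum.inl p.1 ∈ S ∧ Sum.inr p.2 ∈ S).card := by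
  rw [edgeIn, edge_decomp, Finset.filter_union,
    Finset.card_union_of_disjoint (Finset.disjoint_filter_filter (path_apex_disj h))]
  congr 1
  · rw [pathE, Finset.filter_image, Finset.card_image_of_injective _ (path_inj h)]
    congr 1; ext j; simp [Finset.mk_mem_sym2_iff]
  · rw [apexE, Finset.filter_image, Finset.card_image_of_injective _ (apex_inj h)]
    congr 1; ext p; simp [Finset.mk_mem_sym2_iff]

def xfun (h : ℕ) (e : Finset (Fin h)) : Fin (h+1) → Bool :=
  Fin.reverseInduction true (fun j xs => xs == decide (j ∈ e))

lemma xfun_last (h : ℕ) (e : Finset (Fin h)) : xfun h e (Fin.last h) = true :=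
  Fin.reverseInduction_last

lemma xfun_castSucc (h : ℕ) (e : Finset (Fin h)) (j : Fin h) :
    xfun h e j.castSucc = (xfun h e j.succ == decide (j ∈ e)) :=
  Fin.reverseInduction_castSucc j

def Sset (h : ℕ) (e : Finset (Fin h)) : Finset (Fin (h+1) ⊕ Fin 2) :=
  insert (Sum.inr 0) ((univ.filter fun i => xfun h e i = true).image Sum.inl)

lemma mem_Sset_inl (h : ℕ) (e : Finset (Fin h)) (i : Fin (h+1)) :
    Sum.inl i ∈ Sset h e ↔ xfun h e i = true := by simp [Sset]

lemma mem_Sset_inr (h : ℕ) (e : Finset (Fin h)) (k : Fin 2) :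
    Sum.inr k ∈ Sset h e ↔ k = 0 := by simp [Sset]

def eOf (h : ℕ) (S : Finset (Fin (h+1) ⊕ Fin 2)) : Finset (Fin h) :=
  univ.filter fun j => ((Sum.inl j.castSucc ∈ S) ↔ (Sum.inl j.succ ∈ S))

lemma eOf_Sset (h : ℕ) (e : Finset (Fin h)) : eOf h (Sset h e) = e := by
  ext j
  simp only [eOf, Finset.mem_filter, Finset.mem_univ, true_and, mem_Sset_inl, xfun_castSucc]
  by_cases hj : j ∈ e <;> cases hx : xfun h e j.succ <;> simp [hj, hx]

lemma Sset_eOf (h : ℕ) (S : Finset (Fin (h+1) ⊕ Fin 2))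
    (hlast : Sum.inl (Fin.last h) ∈ S) (h0 : Sum.inr 0 ∈ S) (h1 : Sum.inr 1 ∉ S) :
    Sset h (eOf h S) = S := by
  have key : ∀ i : Fin (h+1), (xfun h (eOf h S) i = true ↔ Sum.inl i ∈ S) := by
    intro i
    induction i using Fin.reverseInduction with
    | last => rw [xfun_last]; simp [hlast]
    | cast j ih =>
      rw [xfun_castSucc]
      have hm : j ∈ eOf h S ↔ ((Sum.inl j.castSucc ∈ S) ↔ (Sum.inl j.succ ∈ S)) := by
        simp [eOf]
      by_cases hs : Sum.inl j.succ ∈ S <;> by_cases hc : Sum.inl j.castSucc ∈ S <;>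
        simp_all
  ext a
  cases a with
  | inl i => rw [mem_Sset_inl, key]
  | inr k =>
    rw [mem_Sset_inr]
    fin_cases k <;> simp [h0, h1]

lemma filter_and_compl_card {α : Type*} [Fintype α] [DecidableEq α]
    (p q : α → Prop) [DecidablePred p] [DecidablePred q] :
    (univ.filter fun a => p a ∧ q a).card + (univ.filter fun a => ¬p a ∧ ¬q a).card =
      (univ.filter fun a => p a ↔ q a).card := by
  rw [Finset.card_filter, Finset.card_filter, Finset.card_filter, ← Finset.sum_add_distrib]
  refine Finset.sum_congr rfl fun a _ => ?_
  by_cases hp : p a <;> by_cases hq : q a <;> simp [hp, hq]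

lemma mono_count (h : ℕ) (e : Finset (Fin h)) :
    (edgeIn (Lgraph h) (Sset h e)).card + (edgeIn (Lgraph h) (Sset h e)ᶜ).card =
      (h + 1) + e.card := by
  rw [card_edgeIn, card_edgeIn]
  set S := Sset h e with hS
  have hpath : (univ.filter fun j : Fin h => Sum.inl j.castSucc ∈ S ∧ Sum.inl j.succ ∈ S).card +
      (univ.filter fun j : Fin h => Sum.inl j.castSucc ∈ Sᶜ ∧ Sum.inl j.succ ∈ Sᶜ).card
      = e.card := by
    simp only [Finset.mem_compl]
    rw [filter_and_compl_card]
    have : (univ.filter fun j : Fin h =>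
        ((Sum.inl j.castSucc ∈ S) ↔ (Sum.inl j.succ ∈ S))) = eOf h S := rfl
    rw [this, hS, eOf_Sset]
  have hapex : (univ.filter fun p : Fin (h+1) × Fin 2 => Sum.inl p.1 ∈ S ∧ Sum.inr p.2 ∈ S).card +
      (univ.filter fun p : Fin (h+1) × Fin 2 => Sum.inl p.1 ∈ Sᶜ ∧ Sum.inr p.2 ∈ Sᶜ).card
      = h + 1 := by
    simp only [Finset.mem_compl]
    rw [Finset.card_filter, Finset.card_filter, ← Finset.sum_add_distrib,
      Fintype.sum_prod_type]
    have : ∀ i : Fin (h+1), (∑ k : Fin 2,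
        ((if Sum.inl i ∈ S ∧ Sum.inr k ∈ S then 1 else 0) +
         (if ¬Sum.inl i ∈ S ∧ ¬Sum.inr k ∈ S then 1 else 0))) = 1 := by
      intro i
      rw [Fin.sum_univ_two]
      have m0 : Sum.inr (0 : Fin 2) ∈ S := by rw [hS, mem_Sset_inr]
      have m1 : Sum.inr (1 : Fin 2) ∉ S := by rw [hS, mem_Sset_inr]; decide
      by_cases hi : Sum.inl i ∈ S <;> simp [hi, m0, m1]
    rw [Finset.sum_congr rfl fun i _ => this i]
    simp
  omega

theorem Zbi_L_one_tr (h : ℕ) (hh : 1 ≤ h) (t : ℚ) :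
    ZbiBC (Lgraph h) {Sum.inl (Fin.last h), Sum.inr 0} {Sum.inr 1} t 1 =
      (t ^ 2 + t) ^ h * t := by
  rw [ZbiBC]
  have key : ∑ S ∈ univ.filter (fun S : Finset (Fin (h+1) ⊕ Fin 2) =>
        ({Sum.inl (Fin.last h), Sum.inr 0} : Finset _) ⊆ S ∧ Disjoint S {Sum.inr 1}),
      t ^ ((edgeIn (Lgraph h) S).card + (edgeIn (Lgraph h) Sᶜ).card) * (1:ℚ) ^ S.card
      = ∑ e : Finset (Fin h), t ^ (h + 1) * t ^ e.card := by
    refine (Finset.sum_bij' (fun e _ => Sset h e) (fun S _ => eOf h S) ?_ ?_ ?_ ?_ ?_).symm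
    · intro e _
      rw [Finset.mem_filter]
      refine ⟨Finset.mem_univ _, ?_, ?_⟩
      · rw [Finset.insert_subset_iff, Finset.singleton_subset_iff]
        exact ⟨by rw [mem_Sset_inl]; exact xfun_last h e, by rw [mem_Sset_inr]⟩
      · rw [Finset.disjoint_singleton_right, mem_Sset_inr]
        decide
    · intro S _; exact Finset.mem_univ _
    · intro e _; exact eOf_Sset h e
    · intro S hS
      rw [Finset.mem_filter] at hS
      obtain ⟨-, hB, hC⟩ := hS
      rw [Finset.insert_subset_iff, Finset.singleton_subset_iff] at hB
      rw [Finset.disjoint_singleton_right] at hC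
      exact Sset_eOf h S hB.1 hB.2 hC
    · intro e _
      rw [one_pow, mul_one, ← pow_add, mono_count]
  rw [key]
  rw [← Finset.mul_sum]
  have hsum : ∑ e : Finset (Fin h), t ^ e.card = (t + 1) ^ h := by
    have hp := Finset.prod_add (fun _ : Fin h => t) (fun _ : Fin h => (1:ℚ)) univ
    simp only [Finset.prod_const, Finset.prod_const_one, mul_one, Finset.card_univ,
      Fintype.card_fin, Finset.powerset_univ] at hp
    rw [hp]; exact Finset.sum_congr rfl fun e _ => by rw [one_pow, mul_one]
  rw [hsum]
  have : t ^ 2 + t = t * (t + 1) := by ring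
  rw [this, mul_pow]
  ring
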